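/- If E[X^r] < ∞ for some r > 2 and limsup_{x→∞} F̄(x)^{1+γ}/f(x) < ∞ for some γ with 1/r < γ < 1/2, then sup_x e(x) F̄(x)^γ < ∞, where e is the mean residual life function. -/

import Mathlib

open MeasureTheory Set

/-- If `E[Xʳ] < ∞` for some `r > 2` and `limsup F̄(x)^{1+γ}/f(x) < ∞` for some
`γ ∈ (1/r, 1/2)`, then `sup_x e(x) F̄(x)^γ < ∞`. -/
theorem stmt14 (f : ℝ → ℝ) (hfpos : ∀ x, 0 < f x) (hfc : Continuous f)
    (hfint : IntegrableOn f (Ioi 0))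
    (Fbar : ℝ → ℝ) (hFbar : ∀ x, 0 ≤ x → Fbar x = ∫ t in Ioi x, f t)
    (hF0 : Fbar 0 = 1)
    (r γ : ℝ) (hr : 2 < r) (hγ1 : 1 / r < γ) (hγ2 : γ < 1 / 2)
    (hmom : IntegrableOn (fun t => t ^ r * f t) (Ioi 0))
    (hlimsup : ∃ M x₀ : ℝ, ∀ x ≥ x₀, Fbar x ^ (1 + γ) / f x ≤ M)
    (e : ℝ → ℝ) (he : ∀ x, e x = (∫ t in Ioi x, Fbar t) / Fbar x) :
    ∃ C : ℝ, ∀ x ≥ (0 : ℝ), e x * Fbar x ^ γ ≤ C := by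
  classical
  obtain ⟨M₀, x₀, hM⟩ := hlimsup
  have hr0 : (0 : ℝ) < r := by linarith
  have hγpos : 0 < γ := lt_trans (by positivity) hγ1
  have hγ1' : γ < 1 := by linarith
  set x₁ : ℝ := max x₀ 1 with hx₁def
  have hx₁pos : (0 : ℝ) < x₁ := lt_of_lt_of_le one_pos (le_max_right _ _)
  set M₁ : ℝ := max M₀ 1 with hM₁def
  have hM₁pos : (0 : ℝ) < M₁ := lt_of_lt_of_le one_pos (le_max_right _ _)
  -- the continuous version of Fbar
  set F1 : ℝ → ℝ := fun x => 1 - ∫ t in (0 : ℝ)..x, f t with hF1def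
  have hderiv : ∀ x : ℝ, HasDerivAt F1 (-(f x)) x := by
    intro x
    have h := (hfc.integral_hasStrictDerivAt 0 x).hasDerivAt
    have h2 := (hasDerivAt_const x (1 : ℝ)).sub h
    rw [zero_sub] at h2
    exact h2
  have hF1cont : Continuous F1 :=
    continuous_iff_continuousAt.2 fun x => (hderiv x).continuousAt
  -- Fbar = F1 on [0, ∞)
  have hFint : ∀ x : ℝ, 0 ≤ x → IntegrableOn f (Ioi x) := fun x hx =>
    hfint.mono_set (Ioi_subset_Ioi hx)
  have hF1eq : ∀ x : ℝ, 0 ≤ x → Fbar x = F1 x := by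
    intro x hx
    have hone : (1 : ℝ) = ∫ t in Ioi (0 : ℝ), f t := by rw [← hF0, hFbar 0 le_rfl]
    have hsplit : (∫ t in Ioi (0 : ℝ), f t)
        = (∫ t in Ioc (0 : ℝ) x, f t) + ∫ t in Ioi x, f t := by
      rw [← setIntegral_union Ioc_disjoint_Ioi_same measurableSet_Ioi
        (hfint.mono_set Ioc_subset_Ioi_self) (hFint x hx), Ioc_union_Ioi_eq_Ioi hx]
    have : F1 x = ∫ t in Ioi x, f t := by
      simp only [hF1def]
      rw [intervalIntegral.integral_of_le hx, hone, hsplit]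
      ring
    rw [hFbar x hx, this]
  have hF1pos : ∀ x : ℝ, 0 ≤ x → 0 < F1 x := by
    intro x hx
    have hone : (1 : ℝ) = ∫ t in Ioi (0 : ℝ), f t := by rw [← hF0, hFbar 0 le_rfl]
    have hF1x : F1 x = ∫ t in Ioi x, f t := by
      rw [← hF1eq x hx, hFbar x hx]
    rw [hF1x]
    have h0 : 0 ≤ᵐ[volume.restrict (Ioi x)] f :=
      Filter.Eventually.of_forall fun t => (hfpos t).le
    rw [setIntegral_pos_iff_support_of_nonneg_ae h0 (hFint x hx)]
    have hsupp : Function.support f = univ := by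
      ext t; simp [Function.mem_support, (hfpos t).ne']
    rw [hsupp, univ_inter, Real.volume_Ioi]
    simp
  have hF1anti : Antitone F1 := by
    apply antitone_of_deriv_nonpos
    · exact fun x => (hderiv x).differentiableAt
    · intro x
      rw [(hderiv x).deriv]
      linarith [hfpos x]
  -- the lower bound on f coming from the limsup assumption
  have hfge : ∀ x : ℝ, x₁ ≤ x → F1 x ^ (1 + γ) ≤ M₁ * f x := by
    intro x hx
    have hx0 : (0 : ℝ) ≤ x := le_trans hx₁pos.le hx
    have h1 : Fbar x ^ (1 + γ) / f x ≤ M₁ :=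
      le_trans (hM x (le_trans (le_max_left _ _) hx)) (le_max_left _ _)
    rw [hF1eq x hx0] at h1
    calc F1 x ^ (1 + γ) = F1 x ^ (1 + γ) / f x * f x :=
          (div_mul_cancel₀ _ (hfpos x).ne').symm
      _ ≤ M₁ * f x := by
          exact mul_le_mul_of_nonneg_right h1 (hfpos x).le
  -- the auxiliary function G = F1 ^ (-γ)
  set G : ℝ → ℝ := fun x => F1 x ^ (-γ) with hGdef
  set c : ℝ := γ / M₁ with hcdef
  have hcpos : 0 < c := div_pos hγpos hM₁pos
  have hGderiv : ∀ x : ℝ, 0 ≤ x →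
      HasDerivAt G (-(f x) * (-γ) * F1 x ^ (-γ - 1)) x := fun x hx =>
    (hderiv x).rpow_const (Or.inl (hF1pos x hx).ne')
  have hGkey : ∀ x ∈ Ici x₁, ∀ t ∈ Ici x₁, x ≤ t → c * (t - x) ≤ G t - G x := by
    apply Convex.mul_sub_le_image_sub_of_le_deriv (convex_Ici x₁)
    · intro x hx
      exact ((hGderiv x (le_trans hx₁pos.le hx)).continuousAt).continuousWithinAt
    · intro x hx
      rw [interior_Ici] at hx
      exact ((hGderiv x (le_trans hx₁pos.le (le_of_lt hx))).differentiableAt).differentiableWithinAt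
    · intro x hx
      rw [interior_Ici] at hx
      have hx0 : (0 : ℝ) ≤ x := le_trans hx₁pos.le (le_of_lt hx)
      rw [(hGderiv x hx0).deriv]
      have hF1x := hF1pos x hx0
      have hrpow : F1 x ^ (-γ - 1) = (F1 x ^ (1 + γ))⁻¹ := by
        rw [← Real.rpow_neg hF1x.le]
        ring_nf
      have h1 : F1 x ^ (1 + γ) ≤ M₁ * f x := hfge x (le_of_lt hx)
      have hA : 0 < F1 x ^ (1 + γ) := Real.rpow_pos_of_pos hF1x _
      have h2 : (1 : ℝ) / M₁ ≤ f x * (F1 x ^ (1 + γ))⁻¹ := by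
        rw [← div_eq_mul_inv, le_div_iff₀ hA, div_mul_eq_mul_div, div_le_iff₀ hM₁pos,
          one_mul]
        linarith [h1]
      calc c = γ * (1 / M₁) := by rw [hcdef]; ring
        _ ≤ γ * (f x * (F1 x ^ (1 + γ))⁻¹) := by
            exact mul_le_mul_of_nonneg_left h2 hγpos.le
        _ = -(f x) * (-γ) * F1 x ^ (-γ - 1) := by rw [hrpow]; ring
  -- pointwise decay bound
  have hGpos : ∀ x : ℝ, 0 ≤ x → 0 < G x := fun x hx =>
    Real.rpow_pos_of_pos (hF1pos x hx) _
  have hq : (1 : ℝ) - 1 / γ < -1 := by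
    have h2γ : 2 < 1 / γ := by
      rw [lt_div_iff₀ hγpos]; linarith
    linarith
  have hqne : (1 : ℝ) - 1 / γ ≠ 0 := by linarith
  -- the dominating function and its integral, for each x ≥ x₁
  have hmain : ∀ x : ℝ, x₁ ≤ x →
      IntegrableOn (fun t => (G x + c * (t - x)) ^ (-(1 / γ))) (Ioi x) ∧
      (∫ t in Ioi x, (G x + c * (t - x)) ^ (-(1 / γ)))
        = F1 x ^ (1 - γ) * (M₁ / (1 - γ)) := by
    intro x hx
    have hx0 : (0 : ℝ) ≤ x := le_trans hx₁pos.le hx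
    have hGx : 0 < G x := hGpos x hx0
    have hinnerpos : ∀ t : ℝ, x ≤ t → 0 < G x + c * (t - x) := by
      intro t ht
      have : 0 ≤ c * (t - x) := mul_nonneg hcpos.le (by linarith)
      linarith
    set q : ℝ := 1 - 1 / γ with hqdef
    have hΦderiv : ∀ t ∈ Ici x,
        HasDerivAt (fun t => (G x + c * (t - x)) ^ q / (q * c))
          ((G x + c * (t - x)) ^ (-(1 / γ))) t := by
      intro t ht
      have hipos : 0 < G x + c * (t - x) := hinnerpos t ht
      have hi : HasDerivAt (fun t : ℝ => G x + c * (t - x)) c t := by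
        simpa using HasDerivAt.const_add (G x)
          (HasDerivAt.const_mul c ((hasDerivAt_id t).sub_const x))
      have h2 := (hi.rpow_const (p := q) (Or.inl hipos.ne')).div_const (q * c)
      refine h2.congr_deriv ?_
      have : q - 1 = -(1 / γ) := by rw [hqdef]; ring
      rw [this]
      field_simp
    have hΦtendsto : Filter.Tendsto (fun t => (G x + c * (t - x)) ^ q / (q * c))
        Filter.atTop (nhds 0) := by
      have ha : Filter.Tendsto (fun t : ℝ => t - x) Filter.atTop Filter.atTop := by
        simpa [sub_eq_add_neg] using
          Filter.tendsto_atTop_add_const_right Filter.atTop (-x) Filter.tendsto_id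
      have h1 : Filter.Tendsto (fun t : ℝ => G x + c * (t - x)) Filter.atTop Filter.atTop :=
        Filter.tendsto_atTop_add_const_left Filter.atTop (G x)
          (Filter.Tendsto.const_mul_atTop hcpos ha)
      have h2 : Filter.Tendsto (fun u : ℝ => u ^ q) Filter.atTop (nhds 0) := by
        have : q = -(1 / γ - 1) := by rw [hqdef]; ring
        rw [this]
        have h2γ : 2 < 1 / γ := by
          rw [lt_div_iff₀ hγpos]; linarith
        exact tendsto_rpow_neg_atTop (by linarith)
      have h3 := (h2.comp h1).div_const (q * c)
      simpa using h3
    have hint : IntegrableOn (fun t => (G x + c * (t - x)) ^ (-(1 / γ))) (Ioi x) :=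
      integrableOn_Ioi_deriv_of_nonneg' hΦderiv
        (fun t ht => Real.rpow_nonneg (hinnerpos t (le_of_lt ht)).le _) hΦtendsto
    refine ⟨hint, ?_⟩
    rw [integral_Ioi_of_hasDerivAt_of_tendsto' hΦderiv hint hΦtendsto]
    -- compute 0 - Φ x
    have hGxq : G x ^ q = F1 x ^ (1 - γ) := by
      rw [hGdef]
      dsimp only
      rw [← Real.rpow_mul (hF1pos x hx0).le]
      congr 1
      have hγne : γ ≠ 0 := hγpos.ne'
      rw [hqdef]
      field_simp
      ring
    have heq : (G x + c * (x - x)) = G x := by ring_nf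
    rw [heq, hGxq, hqdef, hcdef]
    have hγne : γ ≠ 0 := hγpos.ne'
    have hc1 : (1 - 1 / γ) * (γ / M₁) = (γ - 1) / M₁ := by
      field_simp
    rw [hc1, zero_sub, div_div_eq_mul_div, show (1 : ℝ) - γ = -(γ - 1) by ring, div_neg]
    ring
  -- pointwise bound F1 t ≤ (G x + c (t - x)) ^ (-(1/γ)) for x₁ ≤ x ≤ t
  have hptwise : ∀ x : ℝ, x₁ ≤ x → ∀ t : ℝ, x ≤ t →
      F1 t ≤ (G x + c * (t - x)) ^ (-(1 / γ)) := by
    intro x hx t ht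
    have hx0 : (0 : ℝ) ≤ x := le_trans hx₁pos.le hx
    have ht0 : (0 : ℝ) ≤ t := le_trans hx0 ht
    have hkey := hGkey x hx t (le_trans hx ht) ht
    have hGx : 0 < G x := hGpos x hx0
    have hipos : 0 < G x + c * (t - x) := by
      have : 0 ≤ c * (t - x) := mul_nonneg hcpos.le (by linarith)
      linarith
    have h1 : G x + c * (t - x) ≤ G t := by linarith
    have h2 : G t ^ (-(1 / γ)) ≤ (G x + c * (t - x)) ^ (-(1 / γ)) :=
      Real.rpow_le_rpow_of_nonpos hipos h1 (neg_nonpos.mpr (by positivity))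
    have h3 : G t ^ (-(1 / γ)) = F1 t := by
      rw [hGdef]
      dsimp only
      rw [← Real.rpow_mul (hF1pos t ht0).le]
      rw [show -γ * -(1 / γ) = 1 by field_simp]
      exact Real.rpow_one _
    rw [← h3]; exact h2
  -- integrability of F1 on (0, ∞)
  have hF1nonneg : ∀ t : ℝ, 0 ≤ t → 0 ≤ F1 t := fun t ht => (hF1pos t ht).le
  have hF1intIoi : IntegrableOn F1 (Ioi 0) := by
    have h1 : IntegrableOn F1 (Ioc 0 x₁) :=
      (hF1cont.continuousOn).integrableOn_compact isCompact_Icc |>.mono_set Ioc_subset_Icc_self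
    have h2 : IntegrableOn F1 (Ioi x₁) := by
      obtain ⟨hint, _⟩ := hmain x₁ le_rfl
      apply hint.mono' (hF1cont.aestronglyMeasurable.restrict)
      filter_upwards [ae_restrict_mem measurableSet_Ioi] with t ht
      have ht' : x₁ ≤ t := le_of_lt ht
      have ht0 : (0 : ℝ) ≤ t := le_trans hx₁pos.le ht'
      rw [Real.norm_eq_abs, abs_of_nonneg (hF1nonneg t ht0)]
      exact hptwise x₁ le_rfl t ht'
    have := h1.union h2
    rwa [Ioc_union_Ioi_eq_Ioi hx₁pos.le] at this
  have hF1int : ∀ x : ℝ, 0 ≤ x → IntegrableOn F1 (Ioi x) := fun x hx =>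
    hF1intIoi.mono_set (Ioi_subset_Ioi hx)
  -- the integral identity for e
  have heF1 : ∀ x : ℝ, 0 ≤ x → e x = (∫ t in Ioi x, F1 t) / F1 x := by
    intro x hx
    rw [he x, hF1eq x hx]
    congr 1
    apply setIntegral_congr_fun measurableSet_Ioi
    intro t ht
    exact hF1eq t (le_trans hx (le_of_lt ht))
  -- bound for x ≥ x₁
  set B : ℝ := M₁ / (1 - γ) with hBdef
  have hlarge : ∀ x : ℝ, x₁ ≤ x → e x * Fbar x ^ γ ≤ B := by
    intro x hx
    have hx0 : (0 : ℝ) ≤ x := le_trans hx₁pos.le hx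
    obtain ⟨hint, hval⟩ := hmain x hx
    have hIb : (∫ t in Ioi x, F1 t) ≤ F1 x ^ (1 - γ) * B := by
      rw [← hval]
      apply setIntegral_mono_on (hF1int x hx0) hint measurableSet_Ioi
      intro t ht
      exact hptwise x hx t (le_of_lt ht)
    rw [heF1 x hx0, hF1eq x hx0]
    have hF1x := hF1pos x hx0
    rw [div_mul_eq_mul_div, div_le_iff₀ hF1x]
    calc (∫ t in Ioi x, F1 t) * F1 x ^ γ
        ≤ F1 x ^ (1 - γ) * B * F1 x ^ γ := by
          exact mul_le_mul_of_nonneg_right hIb (Real.rpow_nonneg hF1x.le _)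
      _ = B * (F1 x ^ (1 - γ) * F1 x ^ γ) := by ring
      _ = B * F1 x := by
          rw [← Real.rpow_add hF1x]
          norm_num
  -- bound for 0 ≤ x ≤ x₁
  set A : ℝ := (∫ t in Ioi (0:ℝ), F1 t) * F1 x₁ ^ (γ - 1) with hAdef
  have hsmall : ∀ x : ℝ, 0 ≤ x → x ≤ x₁ → e x * Fbar x ^ γ ≤ A := by
    intro x hx hxx₁
    have hF1x := hF1pos x hx
    rw [heF1 x hx, hF1eq x hx]
    have h1 : (∫ t in Ioi x, F1 t) ≤ ∫ t in Ioi (0:ℝ), F1 t := by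
      apply setIntegral_mono_set hF1intIoi
      · filter_upwards [ae_restrict_mem measurableSet_Ioi] with t ht
        exact hF1nonneg t (le_of_lt ht)
      · exact HasSubset.Subset.eventuallyLE (Ioi_subset_Ioi hx)
    have h2 : F1 x ^ (γ - 1) ≤ F1 x₁ ^ (γ - 1) :=
      Real.rpow_le_rpow_of_nonpos (hF1pos x₁ hx₁pos.le) (hF1anti hxx₁) (by linarith)
    have h3 : (∫ t in Ioi x, F1 t) / F1 x * F1 x ^ γ
        = (∫ t in Ioi x, F1 t) * F1 x ^ (γ - 1) := by
      rw [Real.rpow_sub hF1x, Real.rpow_one]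
      ring
    rw [h3, hAdef]
    apply mul_le_mul h1 h2 (Real.rpow_nonneg hF1x.le _)
    exact setIntegral_nonneg measurableSet_Ioi fun t ht => hF1nonneg t (le_of_lt ht)
  refine ⟨max B A, fun x hx => ?_⟩
  rcases le_or_gt x x₁ with h | h
  · exact le_trans (hsmall x hx h) (le_max_right _ _)
  · exact le_trans (hlarge x (le_of_lt h)) (le_max_left _ _)
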